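/- Let κ be an uncountable regular cardinal such that the set of all binary sequences of length < κ has cardinality κ. Let ι be an injection from κ into the binary sequences of length < κ with the property that for every x : κ → 2 there is an ordinal α < κ such that there is no β < κ with x↾α ⊆ ι(β). Let T be the set of all binary sequences t of length < κ such that t ⊆ ι(α) for some α < κ, and let ∂T be the set of all binary sequences t of length < κ with t ∉ T such that t↾γ ∈ T for every ordinal γ less than the length of t. Then ∂T has cardinality κ. -/

import Mathlib

/-- A binary sequence, coded as a pair consisting of its length and its values
(values at or beyond the length are irrelevant junk, normalized to `0` by
`IsBSeq`). -/
abbrev BSeq : Type _ := Ordinal × (Ordinal → Fin 2)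

/-- The length of a binary sequence. -/
def bLen (t : BSeq) : Ordinal := t.1

/-- The values of a binary sequence. -/
def bVal (t : BSeq) : Ordinal → Fin 2 := t.2

/-- A pair codes a genuine binary sequence: all values at or beyond the length
are `0`. -/
def IsBSeq (t : BSeq) : Prop := ∀ β, bLen t ≤ β → bVal t β = 0

/-- `BExt t u` means `t ⊆ u`: the binary sequence `u` extends `t`. -/
def BExt (t u : BSeq) : Prop := bLen t ≤ bLen u ∧ ∀ β < bLen t, bVal u β = bVal t β

/-- `BExtFun t x` means `t ⊆ x`: the total function `x` extends the binary
sequence `t`. -/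
def BExtFun (t : BSeq) (x : Ordinal → Fin 2) : Prop := ∀ β < bLen t, x β = bVal t β

/-- `x↾γ`: the restriction of `x : κ → 2` to `γ`, as a binary sequence of
length `γ`. -/
noncomputable def bRestrict (x : Ordinal → Fin 2) (γ : Ordinal) : BSeq :=
  (γ, fun β => if β < γ then x β else 0)

/-- The lexicographic ordering on binary sequences. -/
def BLex (s t : BSeq) : Prop :=
  (BExt s t ∧ s ≠ t) ∨
    ∃ γ, γ < bLen s ∧ γ < bLen t ∧ (∀ β < γ, bVal s β = bVal t β) ∧ bVal s γ < bVal t γ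

universe u

/-- Auxiliary construction: for each `α < κ`, there is a boundary node properly
extending `ι α`, from which `ι α` can be recovered by restriction. -/
lemma stmt10_aux (κ : Cardinal.{u}) (ι : Ordinal → BSeq)
    (hιval : ∀ α < κ.ord, IsBSeq (ι α) ∧ bLen (ι α) < κ.ord)
    (hno : ∀ x : Ordinal → Fin 2, ∃ α < κ.ord,
      ¬ ∃ β < κ.ord, BExt (bRestrict x α) (ι β))
    (α : Ordinal) (hα : α < κ.ord) :
    ∃ t : BSeq, (IsBSeq t ∧ bLen t < κ.ord ∧
        (¬ ∃ β < κ.ord, BExt t (ι β)) ∧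
        ∀ γ < bLen t, ∃ β < κ.ord, BExt (bRestrict (bVal t) γ) (ι β)) ∧
      bLen (ι α) < bLen t ∧ ι α = bRestrict (bVal t) (bLen (ι α)) := by
  set x := bVal (ι α) with hx
  set A : Set Ordinal := {γ | ¬ ∃ β < κ.ord, BExt (bRestrict x γ) (ι β)} with hA
  obtain ⟨α₀, hα₀, hbad⟩ := hno x
  have hAne : A.Nonempty := ⟨α₀, hbad⟩
  set μ := Ordinal.lt_wf.min A hAne with hμ
  have hmem : μ ∈ A := Ordinal.lt_wf.min_mem A hAne
  have hnotin : ∀ γ < μ, γ ∉ A := fun γ hγ hγA =>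
    Ordinal.lt_wf.not_lt_min A hγA hγ
  have hμle : μ ≤ α₀ := Ordinal.lt_wf.min_le hbad
  have hμκ : μ < κ.ord := lt_of_le_of_lt hμle hα₀
  -- the length of `ι α` is strictly below `μ`
  have hlen : bLen (ι α) < μ := by
    by_contra h
    push_neg at h
    exact hmem ⟨α, hα, h, fun β hβ => by
      simp only [bRestrict, bLen, bVal] at hβ ⊢
      rw [if_pos hβ]; rfl⟩
  refine ⟨bRestrict x μ, ⟨?_, ?_, hmem, ?_⟩, ?_, ?_⟩
  · intro β hβ
    simp only [bRestrict, bLen, bVal] at hβ ⊢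
    rw [if_neg (not_lt.2 hβ)]
  · simpa [bRestrict, bLen] using hμκ
  · intro γ hγ
    have hγμ : γ < μ := by simpa [bRestrict, bLen] using hγ
    have h1 : bRestrict (bVal (bRestrict x μ)) γ = bRestrict x γ := by
      refine Prod.ext rfl ?_
      funext β
      simp only [bRestrict, bVal]
      by_cases hβ : β < γ
      · rw [if_pos hβ, if_pos hβ, if_pos (hβ.trans hγμ)]
      · rw [if_neg hβ, if_neg hβ]
    rw [h1]
    have := hnotin γ hγμ
    simpa [hA] using this
  · simpa [bRestrict, bLen] using hlen
  · refine Prod.ext rfl ?_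
    funext β
    simp only [bRestrict, bVal]
    by_cases hβ : β < bLen (ι α)
    · rw [if_pos hβ, if_pos (hβ.trans hlen)]; rfl
    · rw [if_neg hβ]
      exact (hιval α hα).1 β (not_lt.1 hβ)

/-- Let `κ` be an uncountable regular cardinal such that the set
of all binary sequences of length `< κ` has cardinality `κ`.  Let `ι` be an
injection from `κ` into the binary sequences of length `< κ` such that for
every `x : κ → 2` there is `α < κ` such that no `β < κ` satisfies
`x↾α ⊆ ι(β)`.  Let `T` be the set of binary sequences of length `< κ` that are
initial segments of some `ι(α)` with `α < κ`, and let `∂T` be the set of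
binary sequences `t` of length `< κ` with `t ∉ T` all of whose proper
restrictions `t↾γ`, `γ <` length of `t`, lie in `T`.  Then `∂T` has
cardinality `κ`. -/
theorem stmt10 (κ : Cardinal.{u}) (hreg : κ.IsRegular)
    (hunc : Cardinal.aleph0 < κ)
    (hsize : Cardinal.mk ↥{t : BSeq | IsBSeq t ∧ bLen t < κ.ord} =
      Cardinal.lift.{u + 1} κ)
    (ι : Ordinal → BSeq)
    (hιval : ∀ α < κ.ord, IsBSeq (ι α) ∧ bLen (ι α) < κ.ord)
    (hιinj : Set.InjOn ι (Set.Iio κ.ord))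
    (hno : ∀ x : Ordinal → Fin 2, ∃ α < κ.ord,
      ¬ ∃ β < κ.ord, BExt (bRestrict x α) (ι β)) :
    Cardinal.mk ↥{t : BSeq | IsBSeq t ∧ bLen t < κ.ord ∧
        (¬ ∃ α < κ.ord, BExt t (ι α)) ∧
        ∀ γ < bLen t, ∃ α < κ.ord, BExt (bRestrict (bVal t) γ) (ι α)} =
      Cardinal.lift.{u + 1} κ := by
  set D : Set BSeq := {t : BSeq | IsBSeq t ∧ bLen t < κ.ord ∧
        (¬ ∃ α < κ.ord, BExt t (ι α)) ∧
        ∀ γ < bLen t, ∃ α < κ.ord, BExt (bRestrict (bVal t) γ) (ι α)} with hD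
  have upper : Cardinal.mk ↥D ≤ Cardinal.lift.{u + 1} κ := by
    rw [← hsize]
    exact Cardinal.mk_le_mk_of_subset (fun t ht => ⟨ht.1, ht.2.1⟩)
  refine le_antisymm upper ?_
  by_contra hlt
  push_neg at hlt
  -- regularity of the lifted cardinal
  have hreg' : (Cardinal.lift.{u + 1} κ).IsRegular := by
    constructor
    · exact Cardinal.aleph0_le_lift.2 hreg.aleph0_le
    · rw [← Cardinal.lift_ord, ← Ordinal.lift_cof, hreg.cof_eq]
  -- choose boundary nodes
  have H : ∀ a : Set.Iio κ.ord, ∃ t : BSeq, t ∈ D ∧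
      bLen (ι a.1) < bLen t ∧ ι a.1 = bRestrict (bVal t) (bLen (ι a.1)) := by
    rintro ⟨a, ha⟩
    obtain ⟨t, ht, h1, h2⟩ := stmt10_aux κ ι hιval hno a ha
    exact ⟨t, ht, h1, h2⟩
  choose f hfD hflen hfval using H
  set g : Set.Iio κ.ord → ↥D := fun a => ⟨f a, hfD a⟩ with hg
  -- each fiber of `g` injects into the (small) set of ordinals below the length
  have fiber_lt : ∀ t : ↥D, Cardinal.mk ↥(g ⁻¹' {t}) < Cardinal.lift.{u + 1} κ := by
    intro t
    have hinj : Function.Injective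
        (fun a : ↥(g ⁻¹' {t}) =>
          (⟨bLen (ι a.1.1), by
            have : g a.1 = t := a.2
            calc bLen (ι a.1.1) < bLen (f a.1) := hflen a.1
              _ = bLen t.1 := by rw [show f a.1 = t.1 from congrArg Subtype.val this]⟩ :
            Set.Iio (bLen t.1))) := by
      rintro ⟨⟨a, ha⟩, hat⟩ ⟨⟨b, hb⟩, hbt⟩ hab
      have hat' : f ⟨a, ha⟩ = t.1 := congrArg Subtype.val hat
      have hbt' : f ⟨b, hb⟩ = t.1 := congrArg Subtype.val hbt
      have hlen : bLen (ι a) = bLen (ι b) := congrArg Subtype.val hab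
      have : ι a = ι b := by
        rw [hfval ⟨a, ha⟩, hfval ⟨b, hb⟩, hat', hbt', hlen]
      exact Subtype.ext (Subtype.ext (hιinj ha hb this))
    have h1 : Cardinal.mk ↥(g ⁻¹' {t}) ≤ Cardinal.mk ↥(Set.Iio (bLen t.1)) :=
      Cardinal.mk_le_of_injective hinj
    have h2 : Cardinal.mk ↥(Set.Iio (bLen t.1)) = Cardinal.lift.{u + 1} (bLen t.1).card :=
      Ordinal.mk_Iio_ordinal _
    have h3 : (bLen t.1).card < κ := Cardinal.lt_ord.1 t.2.2.1
    calc Cardinal.mk ↥(g ⁻¹' {t}) ≤ Cardinal.lift.{u + 1} (bLen t.1).card := h2 ▸ h1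
      _ < Cardinal.lift.{u + 1} κ := Cardinal.lift_lt.2 h3
  -- but the fibers cover all of `Iio κ.ord`, which has size `κ`
  have hcover : (Set.univ : Set (Set.Iio κ.ord)) = ⋃ t : ↥D, g ⁻¹' {t} := by
    ext a
    simp
  have hbig : Cardinal.mk (Set.Iio κ.ord) = Cardinal.lift.{u + 1} κ := by
    rw [Ordinal.mk_Iio_ordinal, Cardinal.card_ord]
  have : Cardinal.lift.{u + 1} κ < Cardinal.lift.{u + 1} κ := by
    calc Cardinal.lift.{u + 1} κ = Cardinal.mk (Set.Iio κ.ord) := hbig.symm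
      _ = Cardinal.mk ↥(Set.univ : Set (Set.Iio κ.ord)) := Cardinal.mk_univ.symm
      _ = Cardinal.mk ↥(⋃ t : ↥D, g ⁻¹' {t}) := by rw [hcover]
      _ ≤ Cardinal.sum (fun t : ↥D => Cardinal.mk ↥(g ⁻¹' {t})) :=
          Cardinal.mk_iUnion_le_sum_mk
      _ < Cardinal.lift.{u + 1} κ := Cardinal.sum_lt_of_isRegular hreg' hlt fiber_lt
  exact absurd this (lt_irrefl _)
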